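/- Let X be a finite set with |X| = n, let v : 2^X → ℝ be a TU-game (v(∅) = 0) that is self-dual, i.e., v(S) = v(X) − v(X∖S) for all S ⊆ X, and let F be an admissible rescaling satisfying F(n,k) − F(n,k+1) = F(n,n−k) − F(n,n+1−k) for all 0 ≤ k ≤ n. Then Q*_F(v) = v(X)/2, where Q*_F(v) = Σ_{S ⊆ X} f(n,|S|) v(S) and f(n,k) = (F(n,k) − F(n,k+1)) / C(n,k). -/

import Mathlib

/-- `F : ℕ × ℕ → ℝ` (curried) is an admissible rescaling: `F n k` is nonincreasing in `k`
for each fixed `n`, `F n 0 = 1`, and `F n k = 0` whenever `k > n`. -/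
def Admissible (F : ℕ → ℕ → ℝ) : Prop :=
  (∀ n, Antitone (F n)) ∧ (∀ n, F n 0 = 1) ∧ (∀ n k, n < k → F n k = 0)

/-- The weight function `f(n,k) = (F(n,k) − F(n,k+1)) / C(n,k)` associated to `F`. -/
noncomputable def fwt (F : ℕ → ℕ → ℝ) (n k : ℕ) : ℝ :=
  (F n k - F n (k + 1)) / (n.choose k : ℝ)

/-- The collective value `Q*_F(v) = ∑_{S ⊆ X} f(n,|S|) v(S)` of a TU-game `v` on an
`n`-element set `X`. -/
noncomputable def QstarTU {X : Type*} [Fintype X] [DecidableEq X] (F : ℕ → ℕ → ℝ)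
    (n : ℕ) (v : Finset X → ℝ) : ℝ :=
  ∑ S : Finset X, fwt F n S.card * v S

/-- If `v` is a self-dual TU-game on `X` with `|X| = n` (i.e.
`v(S) = v(X) − v(X∖S)` for all `S`) and `F` is an admissible rescaling satisfying
`F(n,k) − F(n,k+1) = F(n,n−k) − F(n,n+1−k)` for all `0 ≤ k ≤ n`, then
`Q*_F(v) = v(X)/2`. -/
theorem statement6 {X : Type*} [Fintype X] [DecidableEq X] (n : ℕ)
    (hn : Fintype.card X = n) (F : ℕ → ℕ → ℝ) (hF : Admissible F)
    (hsym : ∀ k ≤ n, F n k - F n (k + 1) = F n (n - k) - F n (n + 1 - k))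
    (v : Finset X → ℝ) (hv : v ∅ = 0)
    (hsd : ∀ S : Finset X, v S = v Finset.univ - v (Finset.univ \ S)) :
    QstarTU F n v = v Finset.univ / 2 := by
  obtain ⟨hanti, h0, hgt⟩ := hF
  have hcard : ∀ S : Finset X, S.card ≤ n := by
    intro S; rw [← hn]; exact Finset.card_le_univ S
  -- symmetry of fwt
  have hfsym : ∀ k ≤ n, fwt F n k = fwt F n (n - k) := by
    intro k hk
    unfold fwt
    rw [hsym k hk, Nat.choose_symm hk, show n + 1 - k = n - k + 1 from by omega]
  -- total weight is 1
  have hsum : ∑ S : Finset X, fwt F n S.card = 1 := by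
    have h := Finset.sum_powerset (Finset.univ : Finset X) (fun S => fwt F n S.card)
    rw [Finset.powerset_univ, Finset.card_univ, hn] at h
    rw [h]
    have : ∀ j ∈ Finset.range (n + 1),
        ∑ S ∈ Finset.powersetCard j (Finset.univ : Finset X), fwt F n S.card
          = (n.choose j : ℝ) * fwt F n j := by
      intro j hj
      rw [Finset.sum_congr rfl (fun S hS => by
        rw [(Finset.mem_powersetCard.1 hS).2]), Finset.sum_const,
        Finset.card_powersetCard, Finset.card_univ, hn, nsmul_eq_mul]
    rw [Finset.sum_congr rfl this]
    have hterm : ∀ j ∈ Finset.range (n + 1),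
        (n.choose j : ℝ) * fwt F n j = F n j - F n (j + 1) := by
      intro j hj
      have hjn : j ≤ n := Nat.lt_succ_iff.1 (Finset.mem_range.1 hj)
      have : (n.choose j : ℝ) ≠ 0 := by
        exact_mod_cast Nat.choose_pos hjn |>.ne'
      unfold fwt
      field_simp
    rw [Finset.sum_congr rfl hterm, Finset.sum_range_sub' (fun j => F n j)]
    rw [h0, hgt n (n + 1) (by omega)]
    ring
  -- main computation: 2Q = v(univ)
  have hcompl : ∑ S : Finset X, fwt F n S.card * v S
      = ∑ S : Finset X, fwt F n Sᶜ.card * v Sᶜ := by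
    exact (Fintype.sum_bijective _ (Function.Involutive.bijective
      (fun S : Finset X => compl_compl S)) _ _ (fun S => rfl)).symm
  have key : QstarTU F n v + QstarTU F n v = v Finset.univ := by
    unfold QstarTU
    nth_rewrite 2 [hcompl]
    rw [← Finset.sum_add_distrib]
    have : ∀ S : Finset X, fwt F n S.card * v S + fwt F n Sᶜ.card * v Sᶜ
        = fwt F n S.card * v Finset.univ := by
      intro S
      have h1 : Sᶜ.card = n - S.card := by
        rw [Finset.card_compl, hn]
      have h2 : fwt F n Sᶜ.card = fwt F n S.card := by
        rw [h1, ← hfsym S.card (hcard S)]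
      have h3 : v Sᶜ = v Finset.univ - v S := by
        have := hsd Sᶜ
        rw [Finset.sdiff_eq_inter_compl, Finset.univ_inter, compl_compl] at this
        linarith [this]
      rw [h2, h3]; ring
    rw [Finset.sum_congr rfl (fun S _ => this S), ← Finset.sum_mul, hsum, one_mul]
  linarith [key]
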